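/- arXiv:1205.6686 — 6 statements merged into one kernel-verified Lean document; each statement's English description precedes it below -/
import Mathlib

section
/- Suppose Ω is a Cantor group and T : Ω → Ω a minimal translation. Then there exists a dense Gδ subset 𝒢 of C(Ω,ℝ) such that for every f ∈ 𝒢 and every ω ∈ Ω, the sequence V_ω(n) = f(Tⁿ(ω)) is a Gordon potential. -/
open Filter Topology

namespace GordonAux

variable {Ω : Type} [TopologicalSpace Ω] [CommGroup Ω] [IsTopologicalGroup Ω]

/-- Right translation by `a` as a continuous map. -/
def tr (a : Ω) : C(Ω, Ω) := ⟨fun x => x * a, continuous_mul_right a⟩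

variable [CompactSpace Ω]

/-- Basic open sets. -/
def A (ω₀ : Ω) (k q : ℕ) : Set C(Ω, ℝ) :=
  {f | ‖f - f.comp (tr (ω₀ ^ q))‖ < ((k : ℝ) ^ q)⁻¹}

lemma isOpen_A (ω₀ : Ω) (k q : ℕ) : IsOpen (A ω₀ k q) := by
  have hc : Continuous fun f : C(Ω, ℝ) => ‖f - f.comp (tr (ω₀ ^ q))‖ :=
    (continuous_id.sub (ContinuousMap.compRightContinuousMap ℝ (tr (ω₀ ^ q))).continuous).norm
  exact isOpen_lt hc continuous_const

/-- The open dense sets. -/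
def U (ω₀ : Ω) (k : ℕ) : Set C(Ω, ℝ) := ⋃ j : ℕ, A ω₀ k (k + j + 1)

lemma isOpen_U (ω₀ : Ω) (k : ℕ) : IsOpen (U ω₀ k) :=
  isOpen_iUnion fun j => isOpen_A ω₀ k (k + j + 1)

lemma dense_U [T2Space Ω] [TotallyDisconnectedSpace Ω] (ω₀ : Ω) (k : ℕ) (hk : 1 ≤ k) :
    Dense (U ω₀ k) := by
  rw [Metric.dense_iff]
  intro f ε hε
  -- uniform continuity style set
  set F : Ω × Ω → ℝ := fun p => |f (p.1 * p.2) - f p.1| with hF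
  have hFc : Continuous F :=
    ((f.continuous.comp (continuous_fst.mul continuous_snd)).sub
      (f.continuous.comp continuous_fst)).abs
  have hKc : IsCompact {p : Ω × Ω | ε / 2 ≤ F p} :=
    (isClosed_le continuous_const hFc).isCompact
  have hC : IsClosed (Prod.snd '' {p : Ω × Ω | ε / 2 ≤ F p}) :=
    (hKc.image continuous_snd).isClosed
  have h1 : (1 : Ω) ∈ (Prod.snd '' {p : Ω × Ω | ε / 2 ≤ F p})ᶜ := by
    rintro ⟨⟨x, y⟩, hxy, rfl⟩
    simp only [Set.mem_setOf_eq, hF, mul_one, sub_self, abs_zero] at hxy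
    linarith
  obtain ⟨W, hWclopen, hW1, hWV⟩ := compact_exists_isClopen_in_isOpen hC.isOpen_compl h1
  obtain ⟨H, hH⟩ := IsTopologicalGroup.exist_openSubgroup_sub_clopen_nhds_of_one hWclopen hW1
  -- the locally constant approximation
  have hgc : Continuous fun x : Ω =>
      f (Quotient.out (QuotientGroup.mk (s := H.toSubgroup) x)) := by
    have h1c : Continuous fun c : Ω ⧸ H.toSubgroup => f c.out := continuous_of_discreteTopology
    exact h1c.comp continuous_quotient_mk'
  set g : C(Ω, ℝ) := ⟨_, hgc⟩ with hg
  have hgmem : ∀ x h : Ω, h ∈ H.toSubgroup → g (x * h) = g x := by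
    intro x h hh
    have : QuotientGroup.mk (s := H.toSubgroup) (x * h) = QuotientGroup.mk x := by
      rw [QuotientGroup.eq]
      have : (x * h)⁻¹ * x = h⁻¹ := by group
      rw [this]
      exact inv_mem hh
    simp only [hg, ContinuousMap.coe_mk, this]
  have hHmem : ∀ h : Ω, h ∈ H.toSubgroup → ∀ x : Ω, F (x, h) < ε / 2 := by
    intro h hh x
    by_contra hcon
    push_neg at hcon
    exact hWV (hH hh) ⟨(x, h), hcon, rfl⟩
  -- distance estimate
  have hdist : dist g f < ε := by
    rw [ContinuousMap.dist_lt_iff hε]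
    intro x
    have hout : x⁻¹ * (QuotientGroup.mk (s := H.toSubgroup) x).out ∈ H.toSubgroup := by
      rw [← QuotientGroup.eq]
      exact (Quotient.out_eq _).symm
    have := hHmem _ hout x
    simp only [hF] at this
    rw [mul_inv_cancel_left] at this
    simp only [hg, ContinuousMap.coe_mk, Real.dist_eq]
    linarith
  -- a positive power of ω₀ lying in H
  obtain ⟨a, b, hab, heq⟩ := Finite.exists_ne_map_eq_of_infinite
    (fun n : ℕ => QuotientGroup.mk (s := H.toSubgroup) (ω₀ ^ n))
  have key : ∀ a b : ℕ, a < b →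
      QuotientGroup.mk (s := H.toSubgroup) (ω₀ ^ a) = QuotientGroup.mk (ω₀ ^ b) →
      ∃ m : ℕ, 0 < m ∧ ω₀ ^ m ∈ H.toSubgroup := by
    intro a b hlt he
    refine ⟨b - a, Nat.sub_pos_of_lt hlt, ?_⟩
    have h2 : (ω₀ ^ a)⁻¹ * ω₀ ^ b ∈ H.toSubgroup := QuotientGroup.eq.mp he
    have h3 : ω₀ ^ b = ω₀ ^ a * ω₀ ^ (b - a) := by
      rw [← pow_add, Nat.add_sub_cancel' hlt.le]
    rwa [h3, inv_mul_cancel_left] at h2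
  have hm : ∃ m : ℕ, 0 < m ∧ ω₀ ^ m ∈ H.toSubgroup := by
    rcases hab.lt_or_gt with h | h
    · exact key a b h heq
    · exact key b a h heq.symm
  obtain ⟨m, hm0, hmH⟩ := hm
  -- choose q = m * (k + 1)
  have hq1 : k + 1 ≤ m * (k + 1) := Nat.le_mul_of_pos_left _ hm0
  refine ⟨g, Metric.mem_ball.mpr hdist, ?_⟩
  refine Set.mem_iUnion.mpr ⟨m * (k + 1) - (k + 1), ?_⟩
  have hidx : k + (m * (k + 1) - (k + 1)) + 1 = m * (k + 1) := by omega
  rw [A, Set.mem_setOf_eq, hidx]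
  have hzero : g - g.comp (tr (ω₀ ^ (m * (k + 1)))) = 0 := by
    ext x
    have : ω₀ ^ (m * (k + 1)) ∈ H.toSubgroup := by
      rw [pow_mul]; exact pow_mem hmH _
    simp only [ContinuousMap.sub_apply, ContinuousMap.comp_apply, ContinuousMap.zero_apply,
      tr, ContinuousMap.coe_mk]
    rw [hgmem x _ this, sub_self]
  rw [hzero, norm_zero]
  have : (0 : ℝ) < (k : ℝ) := by exact_mod_cast hk
  positivity

end GordonAux

/-- A bounded sequence `V : ℤ → ℝ` is a Gordon potential if there are positive integers
`q k → ∞` with `max_{1 ≤ n ≤ q k} |V n - V (n ± q k)| ≤ k ^ (-q k)` for all `k ≥ 1`. -/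
def IsGordonPotential (V : ℤ → ℝ) : Prop :=
  ∃ q : ℕ → ℕ, (∀ k, 0 < q k) ∧ Tendsto q atTop atTop ∧
    ∀ k : ℕ, 1 ≤ k → ∀ n : ℤ, 1 ≤ n → n ≤ (q k : ℤ) →
      |V n - V (n + (q k : ℤ))| ≤ ((k : ℝ) ^ q k)⁻¹ ∧
        |V n - V (n - (q k : ℤ))| ≤ ((k : ℝ) ^ q k)⁻¹

/-- Suppose `Ω` is a Cantor group and `T ω = ω * ω₀` a minimal
translation.  Then there is a dense Gδ set `𝒢 ⊆ C(Ω, ℝ)` such that for every `f ∈ 𝒢`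
and every `ω ∈ Ω`, the sequence `V_ω(n) = f(Tⁿ ω) = f(ω * ω₀ ^ n)` is a Gordon
potential. -/
theorem generic_gordon_potential
    (Ω : Type) [TopologicalSpace Ω] [CompactSpace Ω] [TopologicalSpace.MetrizableSpace Ω]
    [TotallyDisconnectedSpace Ω] [PerfectSpace Ω] [CommGroup Ω] [IsTopologicalGroup Ω]
    (ω₀ : Ω) (hmin : ∀ ω : Ω, Dense (Set.range fun n : ℤ => ω * ω₀ ^ n)) :
    ∃ 𝒢 : Set C(Ω, ℝ), Dense 𝒢 ∧ IsGδ 𝒢 ∧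
      ∀ f ∈ 𝒢, ∀ ω : Ω, IsGordonPotential (fun n : ℤ => f (ω * ω₀ ^ n)) := by
  classical
  letI : MetricSpace Ω := TopologicalSpace.metrizableSpaceMetric Ω
  refine ⟨⋂ k : ℕ, GordonAux.U ω₀ (k + 1), ?_, ?_, ?_⟩
  · exact dense_iInter_of_isOpen (fun k => GordonAux.isOpen_U ω₀ (k + 1))
      (fun k => GordonAux.dense_U ω₀ (k + 1) k.succ_pos)
  · exact IsGδ.iInter_of_isOpen fun k => GordonAux.isOpen_U ω₀ (k + 1)
  · intro f hf ω
    have hmem : ∀ k : ℕ, ∃ q : ℕ, k + 1 ≤ q ∧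
        ‖f - f.comp (GordonAux.tr (ω₀ ^ q))‖ < (((k : ℝ) + 1) ^ q)⁻¹ := by
      intro k
      have := Set.mem_iInter.mp hf k
      obtain ⟨j, hj⟩ := Set.mem_iUnion.mp this
      refine ⟨(k + 1) + j + 1, by omega, ?_⟩
      have := hj
      rw [GordonAux.A, Set.mem_setOf_eq] at this
      convert this using 3
      push_cast
      ring
    choose qf hqf1 hqf2 using hmem
    set Q : ℕ → ℕ := fun k => Nat.rec 1 (fun k' _ => qf k') k with hQ
    have hQ0 : Q 0 = 1 := rfl
    have hQs : ∀ k', Q (k' + 1) = qf k' := fun _ => rfl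
    refine ⟨Q, ?_, ?_, ?_⟩
    · intro k
      cases k with
      | zero => exact Nat.one_pos
      | succ k' => rw [hQs]; exact lt_of_lt_of_le (Nat.succ_pos _) (hqf1 k')
    · apply tendsto_atTop_mono (f := id) ?_ tendsto_id
      intro k
      cases k with
      | zero => exact Nat.zero_le 1
      | succ k' => rw [hQs]; exact hqf1 k'
    · intro k hk n hn1 hn2
      obtain ⟨k', rfl⟩ : ∃ k'' : ℕ, k = k'' + 1 := ⟨k - 1, by omega⟩
      rw [hQs] at hn2 ⊢
      set q : ℕ := qf k' with hq
      have hbound : ‖f - f.comp (GordonAux.tr (ω₀ ^ q))‖ ≤ ((((k' + 1 : ℕ)) : ℝ) ^ q)⁻¹ := by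
        refine le_of_lt ?_
        have := hqf2 k'
        convert this using 3
        rfl; push_cast; ring
      have key : ∀ x : Ω, |f x - f (x * ω₀ ^ q)| ≤ ((((k' + 1 : ℕ)) : ℝ) ^ q)⁻¹ := by
        intro x
        calc |f x - f (x * ω₀ ^ q)|
            = ‖(f - f.comp (GordonAux.tr (ω₀ ^ q))) x‖ := by
              simp [GordonAux.tr, Real.norm_eq_abs]
          _ ≤ ‖f - f.comp (GordonAux.tr (ω₀ ^ q))‖ := ContinuousMap.norm_coe_le_norm _ _
          _ ≤ _ := hbound
      dsimp only
      constructor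
      · have h1 : ω * ω₀ ^ (n + (q : ℤ)) = (ω * ω₀ ^ n) * ω₀ ^ q := by
          rw [mul_assoc, ← zpow_natCast ω₀ q, ← zpow_add]
        rw [h1]
        exact key _
      · have h1 : ω * ω₀ ^ n = (ω * ω₀ ^ (n - (q : ℤ))) * ω₀ ^ q := by
          rw [mul_assoc, ← zpow_natCast ω₀ q, ← zpow_add, sub_add_cancel]
        rw [h1, abs_sub_comm]
        exact key _
end

section
/- For every matrix M ∈ SL(2,ℝ) there exist constants m₁, m₂ ∈ (0,∞) with the following property: for all nonzero vectors A, B ∈ ℝ², if Δθ ∈ [0,π] denotes the angle between A and B and Δθ̃ ∈ [0,π] denotes the angle between MA and MB, then m₁·Δθ ≤ Δθ̃ ≤ m₂·Δθ. -/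
open InnerProductGeometry Real

/-- Apply a `2 × 2` real matrix to a vector of `ℝ² = EuclideanSpace ℝ (Fin 2)`. -/
noncomputable def matApply (M : Matrix (Fin 2) (Fin 2) ℝ) (v : EuclideanSpace ℝ (Fin 2)) :
    EuclideanSpace ℝ (Fin 2) :=
  (WithLp.equiv 2 (Fin 2 → ℝ)).symm (M.mulVec ((WithLp.equiv 2 (Fin 2 → ℝ)) v))

section Aux

variable {V : Type*} [NormedAddCommGroup V] [InnerProductSpace ℝ V]

/-- Chord length for unit vectors. -/
lemma chord_eq (a b : V) (ha : ‖a‖ = 1) (hb : ‖b‖ = 1) :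
    ‖a - b‖ = 2 * Real.sin (angle a b / 2) := by
  have hc := cos_angle_mul_norm_mul_norm a b
  rw [ha, hb] at hc
  have h1 : ‖a - b‖ ^ 2 = 2 - 2 * Real.cos (angle a b) := by
    rw [norm_sub_sq_real, ha, hb]; nlinarith [hc]
  have h2 : Real.sin (angle a b / 2) ^ 2 = 1 / 2 - Real.cos (angle a b) / 2 := by
    have := Real.sin_sq_eq_half_sub (angle a b / 2)
    rwa [show 2 * (angle a b / 2) = angle a b by ring] at this
  have h3 : 0 ≤ Real.sin (angle a b / 2) :=
    Real.sin_nonneg_of_nonneg_of_le_pi (by linarith [angle_nonneg a b])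
      (by linarith [angle_le_pi a b, Real.pi_pos])
  nlinarith [norm_nonneg (a - b), sq_nonneg (‖a - b‖ - 2 * Real.sin (angle a b / 2))]

lemma norm_normalize_sub (x y : V) (hx : x ≠ 0) (hy : y ≠ 0) :
    ‖‖x‖⁻¹ • x - ‖y‖⁻¹ • y‖ ≤ 2 * ‖x - y‖ / ‖x‖ := by
  have hnx : (0:ℝ) < ‖x‖ := norm_pos_iff.mpr hx
  have hny : (0:ℝ) < ‖y‖ := norm_pos_iff.mpr hy
  have key : ‖x‖⁻¹ • x - ‖y‖⁻¹ • y = ‖x‖⁻¹ • (x - y) + (‖x‖⁻¹ - ‖y‖⁻¹) • y := by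
    rw [smul_sub, sub_smul]; abel
  have h1 : ‖‖x‖⁻¹ • x - ‖y‖⁻¹ • y‖ ≤ ‖x‖⁻¹ * ‖x - y‖ + |‖x‖⁻¹ - ‖y‖⁻¹| * ‖y‖ := by
    rw [key]
    refine (norm_add_le _ _).trans ?_
    rw [norm_smul, norm_smul, Real.norm_eq_abs, Real.norm_eq_abs,
      abs_of_pos (inv_pos.mpr hnx)]
  have h2 : |‖x‖⁻¹ - ‖y‖⁻¹| * ‖y‖ = |‖y‖ - ‖x‖| / ‖x‖ := by
    rw [show ‖x‖⁻¹ - ‖y‖⁻¹ = (‖y‖ - ‖x‖) / (‖x‖ * ‖y‖) by field_simp,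
      abs_div, abs_of_pos (mul_pos hnx hny)]
    field_simp
  have h3 : |‖y‖ - ‖x‖| ≤ ‖x - y‖ := by
    rw [abs_sub_comm]; exact abs_norm_sub_norm_le x y
  rw [h2] at h1
  refine h1.trans ?_
  have h4 : |‖y‖ - ‖x‖| / ‖x‖ ≤ ‖x - y‖ / ‖x‖ := by gcongr
  have h5 : ‖x‖⁻¹ * ‖x - y‖ = ‖x - y‖ / ‖x‖ := by field_simp
  rw [h5]
  have : 2 * ‖x - y‖ / ‖x‖ = ‖x - y‖ / ‖x‖ + ‖x - y‖ / ‖x‖ := by ring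
  linarith

set_option maxHeartbeats 1000000 in
/-- Key estimate: an invertible continuous linear map expands angles by at most
`π * ‖T‖ * ‖S‖` where `S` is the inverse. -/
lemma angle_map_le (T S : V →L[ℝ] V) (hST : ∀ v, S (T v) = v)
    {A B : V} (hA : A ≠ 0) (hB : B ≠ 0) :
    angle (T A) (T B) ≤ Real.pi * (‖T‖ * ‖S‖) * angle A B := by
  have hnA : (0:ℝ) < ‖A‖ := norm_pos_iff.mpr hA
  have hnB : (0:ℝ) < ‖B‖ := norm_pos_iff.mpr hB
  set a : V := ‖A‖⁻¹ • A with ha_def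
  set b : V := ‖B‖⁻¹ • B with hb_def
  have ha : ‖a‖ = 1 := by
    rw [ha_def, norm_smul, Real.norm_eq_abs, abs_of_pos (inv_pos.mpr hnA)]
    field_simp
  have hb : ‖b‖ = 1 := by
    rw [hb_def, norm_smul, Real.norm_eq_abs, abs_of_pos (inv_pos.mpr hnB)]
    field_simp
  have ha0 : a ≠ 0 := by intro h; rw [h] at ha; simp at ha
  have hb0 : b ≠ 0 := by intro h; rw [h] at hb; simp at hb
  have hTa0 : T a ≠ 0 := by
    intro h
    have := hST a
    rw [h, map_zero] at this
    exact ha0 this.symm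
  have hTb0 : T b ≠ 0 := by
    intro h
    have := hST b
    rw [h, map_zero] at this
    exact hb0 this.symm
  have hnTa : (0:ℝ) < ‖T a‖ := norm_pos_iff.mpr hTa0
  have hnTb : (0:ℝ) < ‖T b‖ := norm_pos_iff.mpr hTb0
  have hSpos : (0:ℝ) < ‖S‖ := by
    rcases (norm_nonneg S).lt_or_eq with h | h
    · exact h
    · exfalso
      have : S = 0 := by rw [← norm_eq_zero]; exact h.symm
      have h2 := hST a
      rw [this] at h2
      simp at h2
      exact ha0 h2.symm
  have hTpos : (0:ℝ) < ‖T‖ := by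
    rcases (norm_nonneg T).lt_or_eq with h | h
    · exact h
    · exfalso
      have : T = 0 := by rw [← norm_eq_zero]; exact h.symm
      exact hTa0 (by rw [this]; simp)
  -- angles unchanged by normalization
  have hang : angle a b = angle A B := by
    rw [ha_def, hb_def, angle_smul_left_of_pos _ _ (inv_pos.mpr hnA),
      angle_smul_right_of_pos _ _ (inv_pos.mpr hnB)]
  have hangT : angle (T a) (T b) = angle (T A) (T B) := by
    rw [ha_def, hb_def, map_smul, map_smul, angle_smul_left_of_pos _ _ (inv_pos.mpr hnA),
      angle_smul_right_of_pos _ _ (inv_pos.mpr hnB)]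
  set u : V := ‖T a‖⁻¹ • T a with hu_def
  set v : V := ‖T b‖⁻¹ • T b with hv_def
  have hu : ‖u‖ = 1 := by
    rw [hu_def, norm_smul, Real.norm_eq_abs, abs_of_pos (inv_pos.mpr hnTa)]
    field_simp
  have hv : ‖v‖ = 1 := by
    rw [hv_def, norm_smul, Real.norm_eq_abs, abs_of_pos (inv_pos.mpr hnTb)]
    field_simp
  have hanguv : angle u v = angle (T A) (T B) := by
    rw [hu_def, hv_def, angle_smul_left_of_pos _ _ (inv_pos.mpr hnTa),
      angle_smul_right_of_pos _ _ (inv_pos.mpr hnTb), hangT]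
  -- the chain of inequalities
  have hTalow : 1 ≤ ‖S‖ * ‖T a‖ := by
    have := S.le_opNorm (T a)
    rw [hST a, ha] at this
    exact this
  have step1 : ‖u - v‖ ≤ 2 * ‖T a - T b‖ / ‖T a‖ :=
    norm_normalize_sub (T a) (T b) hTa0 hTb0
  have step2 : 2 * ‖T a - T b‖ / ‖T a‖ ≤ 2 * ‖S‖ * ‖T a - T b‖ := by
    rw [div_le_iff₀ hnTa]
    nlinarith [norm_nonneg (T a - T b)]
  have step3 : ‖T a - T b‖ ≤ ‖T‖ * ‖a - b‖ := by
    have := T.le_opNorm (a - b)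
    rwa [map_sub] at this
  have chord1 : ‖u - v‖ = 2 * Real.sin (angle (T A) (T B) / 2) := by
    rw [chord_eq u v hu hv, hanguv]
  have chord2 : ‖a - b‖ = 2 * Real.sin (angle A B / 2) := by
    rw [chord_eq a b ha hb, hang]
  have hπ' : π = Real.pi := rfl
  set θ := angle A B with hθ
  set φ := angle (T A) (T B) with hφ
  have hθ0 : 0 ≤ θ := angle_nonneg A B
  have hθπ : θ ≤ π := angle_le_pi A B
  have hφ0 : 0 ≤ φ := angle_nonneg _ _
  have hφπ : φ ≤ π := angle_le_pi _ _
  have hπ : (0:ℝ) < π := Real.pi_pos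
  have hsin_low : 2 / π * (φ / 2) ≤ Real.sin (φ / 2) :=
    Real.mul_le_sin (by linarith) (by linarith)
  have hsin_up : Real.sin (θ / 2) ≤ θ / 2 := Real.sin_le (by linarith)
  -- combine
  have main : φ / π ≤ ‖T‖ * ‖S‖ * θ := by
    have c1 : φ / π ≤ Real.sin (φ / 2) := by
      have : 2 / π * (φ / 2) = φ / π := by field_simp
      linarith [hsin_low, this.symm.le]
    have c2 : 2 * Real.sin (φ / 2) ≤ 2 * ‖S‖ * (‖T‖ * ‖a - b‖) := by
      rw [← chord1]
      calc ‖u - v‖ ≤ 2 * ‖T a - T b‖ / ‖T a‖ := step1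
        _ ≤ 2 * ‖S‖ * ‖T a - T b‖ := step2
        _ ≤ 2 * ‖S‖ * (‖T‖ * ‖a - b‖) := by
              have := mul_le_mul_of_nonneg_left step3 (by positivity : (0:ℝ) ≤ 2 * ‖S‖)
              linarith
    have c3 : ‖a - b‖ ≤ θ := by rw [chord2]; linarith
    have c4 : 2 * ‖S‖ * (‖T‖ * ‖a - b‖) ≤ 2 * ‖S‖ * (‖T‖ * θ) := by
      have := mul_le_mul_of_nonneg_left c3 (by positivity : (0:ℝ) ≤ 2 * ‖S‖ * ‖T‖)
      linarith [this]
    linarith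
  rw [div_le_iff₀ hπ] at main
  calc φ ≤ ‖T‖ * ‖S‖ * θ * Real.pi := main
    _ = Real.pi * (‖T‖ * ‖S‖) * θ := by ring

end Aux

/-- For every `M ∈ SL(2,ℝ)` there are constants `m₁, m₂ ∈ (0,∞)` such
that for all nonzero `A, B ∈ ℝ²`, if `Δθ` is the (undirected) angle between `A` and `B`
and `Δθ̃` the angle between `MA` and `MB`, then `m₁ Δθ ≤ Δθ̃ ≤ m₂ Δθ`. -/
theorem angle_comparable_under_SL2
    (M : Matrix.SpecialLinearGroup (Fin 2) ℝ) :
    ∃ m₁ m₂ : ℝ, 0 < m₁ ∧ 0 < m₂ ∧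
      ∀ A B : EuclideanSpace ℝ (Fin 2), A ≠ 0 → B ≠ 0 →
        m₁ * angle A B ≤ angle (matApply (M : Matrix (Fin 2) (Fin 2) ℝ) A)
            (matApply (M : Matrix (Fin 2) (Fin 2) ℝ) B) ∧
          angle (matApply (M : Matrix (Fin 2) (Fin 2) ℝ) A)
              (matApply (M : Matrix (Fin 2) (Fin 2) ℝ) B) ≤ m₂ * angle A B := by
  set Mm : Matrix (Fin 2) (Fin 2) ℝ := (M : Matrix (Fin 2) (Fin 2) ℝ) with hMm
  set Nm : Matrix (Fin 2) (Fin 2) ℝ :=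
    ((M⁻¹ : Matrix.SpecialLinearGroup (Fin 2) ℝ) : Matrix (Fin 2) (Fin 2) ℝ) with hNm
  set T : EuclideanSpace ℝ (Fin 2) →L[ℝ] EuclideanSpace ℝ (Fin 2) :=
    LinearMap.toContinuousLinearMap (Matrix.toEuclideanLin Mm) with hTdef
  set S : EuclideanSpace ℝ (Fin 2) →L[ℝ] EuclideanSpace ℝ (Fin 2) :=
    LinearMap.toContinuousLinearMap (Matrix.toEuclideanLin Nm) with hSdef
  have hT : ∀ v, matApply Mm v = T v := by
    intro v
    rw [hTdef]
    simp [matApply, Matrix.toEuclideanLin_apply]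
  have hS : ∀ v, matApply Nm v = S v := by
    intro v
    rw [hSdef]
    simp [matApply, Matrix.toEuclideanLin_apply]
  have hNM : Nm * Mm = 1 := by
    rw [hNm, hMm, ← Matrix.SpecialLinearGroup.coe_mul, inv_mul_cancel,
      Matrix.SpecialLinearGroup.coe_one]
  have hMN : Mm * Nm = 1 := by
    rw [hNm, hMm, ← Matrix.SpecialLinearGroup.coe_mul, mul_inv_cancel,
      Matrix.SpecialLinearGroup.coe_one]
  have hST : ∀ v, S (T v) = v := by
    intro v
    rw [← hT, ← hS]
    simp only [matApply, Equiv.apply_symm_apply, Matrix.mulVec_mulVec, hNM, Matrix.one_mulVec,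
      Equiv.symm_apply_apply]
  have hTS : ∀ v, T (S v) = v := by
    intro v
    rw [← hT, ← hS]
    simp only [matApply, Equiv.apply_symm_apply, Matrix.mulVec_mulVec, hMN, Matrix.one_mulVec,
      Equiv.symm_apply_apply]
  -- a nonzero vector
  set w : EuclideanSpace ℝ (Fin 2) := EuclideanSpace.single (0 : Fin 2) (1 : ℝ) with hw_def
  have hw : w ≠ 0 := by
    intro h
    have : ‖w‖ = 1 := by rw [hw_def, EuclideanSpace.norm_single]; norm_num
    rw [h] at this
    simp at this
  have hTpos : (0:ℝ) < ‖T‖ := by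
    rw [norm_pos_iff]
    intro h
    apply hw
    rw [← hST w, h]
    simp
  have hSpos : (0:ℝ) < ‖S‖ := by
    rw [norm_pos_iff]
    intro h
    apply hw
    rw [← hTS w, h]
    simp
  have hπ : (0:ℝ) < Real.pi := Real.pi_pos
  refine ⟨(Real.pi * (‖S‖ * ‖T‖))⁻¹, Real.pi * (‖T‖ * ‖S‖), by positivity, by positivity,
    fun A B hA hB => ?_⟩
  have hTA0 : T A ≠ 0 := fun h => hA (by rw [← hST A, h, map_zero])
  have hTB0 : T B ≠ 0 := fun h => hB (by rw [← hST B, h, map_zero])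
  rw [hT A, hT B]
  constructor
  · have := angle_map_le S T hTS hTA0 hTB0
    rw [hST A, hST B] at this
    rw [inv_mul_le_iff₀ (by positivity)]
    exact this
  · exact angle_map_le T S hST hA hB
end

section
/- Let Ω be a compact abelian topological group with identity e, and let ω₁, ω₂ ∈ Ω each generate a dense cyclic subgroup of Ω (so that the translations T(ω) = ω·ω₁ and T̃(ω) = ω·ω₂ are minimal). Let f : Ω → ℝ be continuous and suppose there exist ω₀ ∈ Ω and a positive integer n₀ such that f(ω₀·ω₁^{n₀+m}) = f(ω₀·ω₁^m) for every m ∈ ℤ. Then f(ω·ω₂^{n₀}) = f(ω) for every ω ∈ Ω; that is, f is n₀-periodic with respect to every minimal translation of Ω. -/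
/-- Let `Ω` be a compact abelian topological group, and suppose
`ω₁, ω₂ ∈ Ω` each generate a dense cyclic subgroup (so the corresponding translations
are minimal).  Let `f : Ω → ℝ` be continuous and suppose there are `ω₀ ∈ Ω` and
`n₀ ≥ 1` such that `f (ω₀ * ω₁ ^ (n₀ + m)) = f (ω₀ * ω₁ ^ m)` for every `m ∈ ℤ`.
Then `f (ω * ω₂ ^ n₀) = f ω` for every `ω ∈ Ω`; i.e. `f` is `n₀`-periodic with respect
to every minimal translation. -/
theorem periodicity_independent_of_translation
    (Ω : Type) [TopologicalSpace Ω] [CompactSpace Ω] [CommGroup Ω] [IsTopologicalGroup Ω]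
    (ω₁ ω₂ : Ω)
    (h₁ : Dense (Set.range fun n : ℤ => ω₁ ^ n))
    (h₂ : Dense (Set.range fun n : ℤ => ω₂ ^ n))
    (f : Ω → ℝ) (hf : Continuous f)
    (ω : Ω) (n₀ : ℕ) (hn₀ : 0 < n₀)
    (hper : ∀ m : ℤ, f (ω * ω₁ ^ ((n₀ : ℤ) + m)) = f (ω * ω₁ ^ m)) :
    ∀ x : Ω, f (x * ω₂ ^ n₀) = f x := by
  -- Step 1: f (y * ω₁ ^ n₀) = f y for all y, by density of the orbit of ω.
  have step1 : ∀ y : Ω, f (y * ω₁ ^ n₀) = f y := by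
    have key : ∀ z : Ω, f (ω * z * ω₁ ^ n₀) = f (ω * z) := by
      have hcl : IsClosed {z : Ω | f (ω * z * ω₁ ^ n₀) = f (ω * z)} :=
        isClosed_eq
          (hf.comp (((continuous_const.mul continuous_id).mul continuous_const)))
          (hf.comp (continuous_const.mul continuous_id))
      have hsub : (Set.range fun m : ℤ => ω₁ ^ m) ⊆
          {z : Ω | f (ω * z * ω₁ ^ n₀) = f (ω * z)} := by
        rintro _ ⟨m, rfl⟩
        have e : ω * ω₁ ^ m * ω₁ ^ n₀ = ω * ω₁ ^ ((n₀ : ℤ) + m) := by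
          rw [mul_assoc, ← zpow_natCast ω₁ n₀, ← zpow_add, add_comm]
        show f (ω * ω₁ ^ m * ω₁ ^ n₀) = f (ω * ω₁ ^ m)
        rw [e]
        exact hper m
      exact fun z => (hcl.closure_subset_iff.mpr hsub) (h₁ z)
    intro y
    have h := key (ω⁻¹ * y)
    simpa [mul_inv_cancel_left] using h
  -- Step 2: f is invariant under all integer powers of ω₁ ^ n₀.
  have step2 : ∀ k : ℤ, ∀ y : Ω, f (y * (ω₁ ^ n₀) ^ k) = f y := by
    intro k
    induction k using Int.induction_on with
    | zero => simp
    | succ k ih =>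
        intro y
        have e : y * (ω₁ ^ n₀) ^ ((k : ℤ) + 1) = (y * (ω₁ ^ n₀) ^ (k : ℤ)) * ω₁ ^ n₀ := by
          rw [zpow_add, zpow_one, mul_assoc]
        rw [e, step1, ih]
    | pred k ih =>
        intro y
        have h := step1 (y * (ω₁ ^ n₀) ^ (-(k : ℤ) - 1))
        have e : y * (ω₁ ^ n₀) ^ (-(k : ℤ) - 1) * ω₁ ^ n₀ = y * (ω₁ ^ n₀) ^ (-(k : ℤ)) := by
          group
        rw [e] at h
        rw [← h]
        exact ih y
  -- Step 3: the set of x with f (y * x ^ n₀) = f y for all y is closed and contains all ω₁ ^ k.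
  have hclB : IsClosed {x : Ω | ∀ y : Ω, f (y * x ^ n₀) = f y} := by
    have e : {x : Ω | ∀ y : Ω, f (y * x ^ n₀) = f y}
        = ⋂ y : Ω, {x : Ω | f (y * x ^ n₀) = f y} := by
      ext x; simp
    rw [e]
    exact isClosed_iInter fun y =>
      isClosed_eq (hf.comp (continuous_const.mul (continuous_pow n₀))) continuous_const
  have hsubB : (Set.range fun n : ℤ => ω₁ ^ n) ⊆ {x : Ω | ∀ y : Ω, f (y * x ^ n₀) = f y} := by
    rintro _ ⟨k, rfl⟩ y
    have e : (ω₁ ^ k) ^ n₀ = (ω₁ ^ n₀) ^ k := by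
      rw [← zpow_natCast (ω₁ ^ k) n₀, ← zpow_mul, mul_comm, zpow_mul, zpow_natCast]
    rw [e]
    exact step2 k y
  -- Step 4: by density of the powers of ω₁, every x (in particular ω₂) lies in this set.
  have hmem : ω₂ ∈ {x : Ω | ∀ y : Ω, f (y * x ^ n₀) = f y} :=
    (hclB.closure_subset_iff.mpr hsubB) (h₁ ω₂)
  exact fun x => hmem x
end

section
/- Let Ω be a compact metrizable topological group with identity e, let d be a translation-invariant metric inducing the topology of Ω, and let ω₀ ∈ Ω be such that {ω₀ⁿ : n ∈ ℤ} is dense in Ω. Define F : Ω → ℓ∞(ℤ) by F(ω)(n) = d(e, ω·ω₀ⁿ). Then F is continuous and injective; hence (Ω being compact) F is a topological embedding of Ω into ℓ∞(ℤ). -/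
set_option synthInstance.maxHeartbeats 1000000
set_option maxHeartbeats 1000000


/-- Let `Ω` be a compact metrizable topological group whose topology is
induced by a translation-invariant metric `dist`, and let `ω₀` generate a dense cyclic
subgroup of `Ω`.  Let `F : Ω → ℓ∞(ℤ)` be given by `F(ω)(n) = dist(1, ω * ω₀ ^ n)`.
Then `F` is continuous and injective, hence (by compactness) a topological embedding
of `Ω` into `ℓ∞(ℤ)`. -/
theorem embedding_into_linfty
    (Ω : Type) [MetricSpace Ω] [CompactSpace Ω] [Group Ω] [IsTopologicalGroup Ω]
    (hinv : ∀ a x y : Ω, dist (a * x) (a * y) = dist x y ∧ dist (x * a) (y * a) = dist x y)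
    (ω₀ : Ω) (hgen : Dense (Set.range fun n : ℤ => ω₀ ^ n)) :
    ∃ F : Ω → lp (fun _ : ℤ => ℝ) ⊤,
      (∀ (ω : Ω) (n : ℤ), F ω n = dist (1 : Ω) (ω * ω₀ ^ n)) ∧
        Continuous F ∧ Function.Injective F ∧ Topology.IsEmbedding F := by
  have hbd : ∃ C : ℝ, ∀ x y : Ω, dist x y ≤ C := by
    obtain ⟨C, hC⟩ := (isCompact_univ (X := Ω)).isBounded.subset_closedBall (1 : Ω)
    exact ⟨C + C, fun x y => (dist_triangle x 1 y).trans (by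
      have hx := hC (Set.mem_univ x)
      have hy := hC (Set.mem_univ y)
      simp [Metric.mem_closedBall] at hx hy
      linarith [dist_triangle x (1:Ω) y, dist_comm (1:Ω) y])⟩
  obtain ⟨C, hC⟩ := hbd
  have hmem : ∀ ω : Ω, Memℓp (fun n : ℤ => dist (1 : Ω) (ω * ω₀ ^ n)) ⊤ := by
    intro ω
    apply memℓp_infty
    refine ⟨C, ?_⟩
    rintro x ⟨n, rfl⟩
    simpa [abs_of_nonneg dist_nonneg] using hC 1 (ω * ω₀ ^ n)
  set F : Ω → lp (fun _ : ℤ => ℝ) ⊤ := fun ω => ⟨_, hmem ω⟩ with hF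
  have hFapp : ∀ (ω : Ω) (n : ℤ), F ω n = dist (1 : Ω) (ω * ω₀ ^ n) := fun ω n => rfl
  have hlip : LipschitzWith 1 F := by
    intro ω ω'
    rw [edist_dist, edist_dist, ENNReal.coe_one, one_mul]
    apply ENNReal.ofReal_le_ofReal
    rw [dist_eq_norm]
    apply lp.norm_le_of_forall_le dist_nonneg
    intro n
    have : ‖(F ω - F ω') n‖ = |dist (1 : Ω) (ω * ω₀ ^ n) - dist (1 : Ω) (ω' * ω₀ ^ n)| := by
      simp [hFapp, Real.norm_eq_abs]
    rw [this]
    calc |dist (1 : Ω) (ω * ω₀ ^ n) - dist (1 : Ω) (ω' * ω₀ ^ n)|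
        ≤ dist (ω * ω₀ ^ n) (ω' * ω₀ ^ n) := by
          rw [dist_comm (1:Ω) (ω * ω₀ ^ n), dist_comm (1:Ω) (ω' * ω₀ ^ n)]
          exact abs_dist_sub_le _ _ _
      _ = dist ω ω' := (hinv (ω₀ ^ n) ω ω').2
  have hinj : Function.Injective F := by
    intro ω ω' h
    have hn : ∀ n : ℤ, dist ω⁻¹ (ω₀ ^ n) = dist ω'⁻¹ (ω₀ ^ n) := by
      intro n
      have h1 : dist (1 : Ω) (ω * ω₀ ^ n) = dist (1 : Ω) (ω' * ω₀ ^ n) := by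
        rw [← hFapp, ← hFapp, h]
      have e1 : dist (1 : Ω) (ω * ω₀ ^ n) = dist ω⁻¹ (ω₀ ^ n) := by
        have := (hinv ω⁻¹ 1 (ω * ω₀ ^ n)).1
        rw [mul_one, ← mul_assoc, inv_mul_cancel, one_mul] at this
        exact this.symm
      have e2 : dist (1 : Ω) (ω' * ω₀ ^ n) = dist ω'⁻¹ (ω₀ ^ n) := by
        have := (hinv ω'⁻¹ 1 (ω' * ω₀ ^ n)).1
        rw [mul_one, ← mul_assoc, inv_mul_cancel, one_mul] at this
        exact this.symm
      rw [← e1, ← e2, h1]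
    have hall : ∀ g : Ω, dist ω⁻¹ g = dist ω'⁻¹ g := by
      have hc : Continuous fun g : Ω => dist ω⁻¹ g - dist ω'⁻¹ g := ((continuous_const.dist continuous_id).sub (continuous_const.dist continuous_id))
      have hz : ∀ g ∈ Set.range (fun n : ℤ => ω₀ ^ n),
          (fun g : Ω => dist ω⁻¹ g - dist ω'⁻¹ g) g = 0 := by
        rintro g ⟨n, rfl⟩; simp [hn n]
      intro g
      have := Continuous.ext_on hgen hc continuous_const (fun g hg => hz g hg)
      have := congrFun this g
      simpa [sub_eq_zero] using this
    have : dist ω⁻¹ ω'⁻¹ = 0 := by rw [hall ω'⁻¹]; simp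
    have := dist_eq_zero.mp this
    exact inv_injective this
  have hemb : Topology.IsEmbedding F := by
    have hcl := (hlip.continuous).isClosedEmbedding hinj
    exact hcl.toIsEmbedding
  exact ⟨F, hFapp, hlip.continuous, hinj, hemb⟩
end

section
/- Let m ≥ 2 be an integer and let (n_v)_{v≥0} be positive integers with n₀ = 1, n₁ > 1, n_v | n_{v+1} for all v, and n_v³ ≤ n_{v+1} ≤ n_v^{3m} for all v ≥ 1. For i ∈ ℤ let a_v(i) ∈ {0,1,…,n_v − 1} be the residue of i modulo n_v, and define V_i = Σ_{v=1}^{∞} a_v(i)/(n_{v−1}²·n_v) (the series converges). Then for all i₁, i₂ ∈ ℤ with i₁ ≠ i₂: if |i₁ − i₂| < n₁ then |V_{i₁} − V_{i₂}| ≥ (2/3)·n₁^{−(3m+1)}, and if |i₁ − i₂| ≥ n₁ then |V_{i₁} − V_{i₂}| ≥ (2/3)·|i₁ − i₂|^{−(3m+1)}. In particular, the sequence (V_i) is a distal limit-periodic sequence with polynomially bounded approximation function. -/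
/-- The residue of `i` modulo `n_v`, as a natural number in `{0, …, n_v − 1}`. -/
def residue (nv : ℕ) (i : ℤ) : ℕ := (i % (nv : ℤ)).toNat

/-- The limit-periodic sequence `V_i = ∑_{v ≥ 1} a_v(i) / (n_{v−1}² n_v)`. -/
noncomputable def distalV (n : ℕ → ℕ) (i : ℤ) : ℝ :=
  ∑' v : ℕ, (residue (n (v + 1)) i : ℝ) / ((n v : ℝ) ^ 2 * (n (v + 1) : ℝ))

lemma residue_cast (nv : ℕ) (h : 0 < nv) (i : ℤ) : (residue nv i : ℤ) = i % nv := by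
  unfold residue
  exact Int.toNat_of_nonneg (Int.emod_nonneg i (by exact_mod_cast h.ne'))

lemma residue_lt (nv : ℕ) (h : 0 < nv) (i : ℤ) : residue nv i < nv := by
  have h1 : i % (nv : ℤ) < nv := Int.emod_lt_of_pos i (by exact_mod_cast h)
  have h2 : (0:ℤ) ≤ i % nv := Int.emod_nonneg i (by exact_mod_cast h.ne')
  unfold residue
  omega

lemma residue_eq_of_dvd (nv : ℕ) {i₁ i₂ : ℤ} (hd : (nv : ℤ) ∣ (i₁ - i₂)) :
    residue nv i₁ = residue nv i₂ := by
  unfold residue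
  congr 1
  rw [Int.emod_eq_emod_iff_emod_sub_eq_zero]
  exact Int.emod_eq_zero_of_dvd hd

lemma two_mul_le_cube {a : ℕ} (h : 2 ≤ a) : 2 * a ≤ a ^ 3 := by
  calc 2 * a ≤ a * a := Nat.mul_le_mul_right _ h
    _ ≤ a * a * a := Nat.le_mul_of_pos_right _ (by omega)
    _ = a ^ 3 := by ring

lemma nge (n : ℕ → ℕ) (hn0 : n 0 = 1) (hn1 : 1 < n 1)
    (hgrow3 : ∀ v, 1 ≤ v → n v ^ 3 ≤ n (v + 1)) : ∀ v, 2 ^ v ≤ n v := by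
  intro v
  induction v with
  | zero => simp [hn0]
  | succ v ih =>
    rcases Nat.eq_zero_or_pos v with h0 | h1
    · subst h0; simpa using Nat.succ_le_of_lt hn1
    · have h2 : 2 ≤ n v := le_trans (Nat.one_lt_two_pow_iff.mpr (by omega)) ih
      calc 2 ^ (v+1) = 2 * 2 ^ v := by ring
        _ ≤ 2 * n v := by omega
        _ ≤ n v ^ 3 := two_mul_le_cube h2
        _ ≤ n (v+1) := hgrow3 v h1

lemma nshift (n : ℕ → ℕ) (hn0 : n 0 = 1) (hn1 : 1 < n 1)
    (hgrow3 : ∀ v, 1 ≤ v → n v ^ 3 ≤ n (v + 1)) :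
    ∀ u, 1 ≤ u → ∀ j, 2 ^ j * n u ≤ n (j + u) := by
  intro u hu j
  induction j with
  | zero => simp
  | succ j ih =>
    have h2 : 2 ≤ n (j + u) := by
      have hb := nge n hn0 hn1 hgrow3 (j+u)
      have h1 : 2 ^ 1 ≤ 2 ^ (j+u) := Nat.pow_le_pow_right (by norm_num) (by omega)
      omega
    calc 2 ^ (j+1) * n u = 2 * (2 ^ j * n u) := by ring
      _ ≤ 2 * n (j + u) := by omega
      _ ≤ n (j + u) ^ 3 := two_mul_le_cube h2
      _ ≤ n (j + u + 1) := hgrow3 (j+u) (by omega)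
      _ = n (j + 1 + u) := by ring_nf

lemma nchain (n : ℕ → ℕ) (hdvd : ∀ v, n v ∣ n (v + 1)) :
    ∀ a b, a ≤ b → n a ∣ n b := by
  intro a b hab
  induction b, hab using Nat.le_induction with
  | base => exact dvd_refl _
  | succ b hab ih => exact ih.trans (hdvd b)

lemma quarter_pow (v : ℕ) : ((1:ℝ)/4) ^ v = 1 / ((2:ℝ) ^ v) ^ 2 := by
  rw [div_pow, one_pow, show (4:ℝ) = 2 ^ 2 by norm_num, ← pow_mul, ← pow_mul, Nat.mul_comm]

lemma summable_distal (n : ℕ → ℕ) (hpos : ∀ v, 0 < n v) (hge : ∀ v, 2 ^ v ≤ n v) (i : ℤ) :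
    Summable fun v : ℕ => (residue (n (v + 1)) i : ℝ) / ((n v : ℝ) ^ 2 * (n (v + 1) : ℝ)) := by
  refine Summable.of_nonneg_of_le ?_ ?_
    (summable_geometric_of_lt_one (r := (1:ℝ)/4) (by norm_num) (by norm_num))
  · intro v
    have h2 : (0:ℝ) < (n v : ℝ) ^ 2 * (n (v+1) : ℝ) := by
      have h3 : (0:ℝ) < (n v : ℝ) := by exact_mod_cast hpos v
      have h4 : (0:ℝ) < (n (v+1) : ℝ) := by exact_mod_cast hpos (v+1)
      positivity
    exact div_nonneg (Nat.cast_nonneg _) h2.le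
  · intro v
    have hv : (0:ℝ) < (n v : ℝ) := by exact_mod_cast hpos v
    have hv1 : (0:ℝ) < (n (v+1) : ℝ) := by exact_mod_cast hpos (v+1)
    have hres : (residue (n (v+1)) i : ℝ) ≤ (n (v+1) : ℝ) := by
      exact_mod_cast (residue_lt (n (v+1)) (hpos (v+1)) i).le
    have hgv : ((2:ℝ) ^ v) ≤ (n v : ℝ) := by exact_mod_cast hge v
    calc (residue (n (v+1)) i : ℝ) / ((n v : ℝ) ^ 2 * (n (v+1) : ℝ))
        ≤ (n (v+1) : ℝ) / ((n v : ℝ) ^ 2 * (n (v+1) : ℝ)) := by gcongr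
      _ = 1 / (n v : ℝ) ^ 2 := by field_simp
      _ ≤ 1 / ((2:ℝ) ^ v) ^ 2 := by gcongr
      _ = ((1:ℝ)/4) ^ v := (quarter_pow v).symm

set_option maxHeartbeats 1000000 in
/-- Let `m ≥ 2` and `(n_v)` be positive integers with `n₀ = 1`,
`n₁ > 1`, `n_v ∣ n_{v+1}`, and `n_v ^ 3 ≤ n_{v+1} ≤ n_v ^ (3m)` for `v ≥ 1`.  With
`a_v(i)` the residue of `i` mod `n_v` and `V_i = ∑_{v ≥ 1} a_v(i)/(n_{v−1}² n_v)` (the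
series converges), one has for all `i₁ ≠ i₂`: if `|i₁ − i₂| < n₁` then
`|V_{i₁} − V_{i₂}| ≥ (2/3) n₁^{−(3m+1)}`, and if `|i₁ − i₂| ≥ n₁` then
`|V_{i₁} − V_{i₂}| ≥ (2/3) |i₁ − i₂|^{−(3m+1)}`; so `(V_i)` is distal with a
polynomially bounded approximation function. -/
theorem distal_sequence_lower_bound
    (m : ℕ) (hm : 2 ≤ m) (n : ℕ → ℕ) (hpos : ∀ v, 0 < n v)
    (hn0 : n 0 = 1) (hn1 : 1 < n 1) (hdvd : ∀ v, n v ∣ n (v + 1))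
    (hgrow : ∀ v, 1 ≤ v → n v ^ 3 ≤ n (v + 1) ∧ n (v + 1) ≤ n v ^ (3 * m)) :
    (∀ i : ℤ, Summable fun v : ℕ =>
        (residue (n (v + 1)) i : ℝ) / ((n v : ℝ) ^ 2 * (n (v + 1) : ℝ))) ∧
      ∀ i₁ i₂ : ℤ, i₁ ≠ i₂ →
        ((|i₁ - i₂| < (n 1 : ℤ)) →
            (2 / 3) * ((n 1 : ℝ) ^ (3 * m + 1))⁻¹ ≤ |distalV n i₁ - distalV n i₂|) ∧
          (((n 1 : ℤ) ≤ |i₁ - i₂|) →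
            (2 / 3) * ((|i₁ - i₂| : ℝ) ^ (3 * m + 1))⁻¹ ≤
              |distalV n i₁ - distalV n i₂|) := by
  have hgrow3 : ∀ v, 1 ≤ v → n v ^ 3 ≤ n (v + 1) := fun v hv => (hgrow v hv).1
  have hge := nge n hn0 hn1 hgrow3
  have hsum := summable_distal n hpos hge
  refine ⟨hsum, ?_⟩
  intro i₁ i₂ hne
  set k : ℤ := i₁ - i₂ with hkdef
  have hk : k ≠ 0 := sub_ne_zero.mpr hne
  set K : ℕ := k.natAbs with hKdef
  have hK1 : 1 ≤ K := by
    have := Int.natAbs_pos.mpr hk; omega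
  set N : ℕ := K + 1 with hNdef
  have hKN : K < 2 ^ N :=
    lt_of_lt_of_le (Nat.lt_two_pow_self (n := K)) (Nat.pow_le_pow_right (by norm_num) (by omega))
  have hub : ∀ v, (n v : ℤ) ∣ k → n v ≤ K := by
    intro v hv
    have h1 : (n v : ℤ) ≤ |k| := Int.le_of_dvd (abs_pos.mpr hk) ((dvd_abs _ _).mpr hv)
    have h2 : |k| = (K : ℤ) := Int.abs_eq_natAbs k
    exact_mod_cast h2 ▸ h1
  classical
  set P : ℕ → Prop := fun v => (n v : ℤ) ∣ k with hPdef
  have hP0 : P 0 := by show (n 0 : ℤ) ∣ k; rw [hn0]; exact one_dvd _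
  set w : ℕ := Nat.findGreatest P N with hwdef
  have hPw' : (n w : ℤ) ∣ k := Nat.findGreatest_spec (Nat.zero_le N) hP0
  have hwN : w < N := by
    by_contra h
    have h1 : 2 ^ N ≤ 2 ^ w := Nat.pow_le_pow_right (by norm_num) (by omega)
    have h2 := hub w hPw'
    have h3 := hge w
    omega
  have hnotP : ¬ P (w + 1) :=
    Nat.findGreatest_is_greatest (P := P) (n := N) (k := w+1) (by omega) (by omega)
  have hnotdvd : ¬ ((n (w+1) : ℤ) ∣ k) := hnotP
  -- integer facts about the main digit difference
  have hposw1 : 0 < n (w+1) := hpos (w+1)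
  set d : ℤ := (residue (n (w+1)) i₁ : ℤ) - (residue (n (w+1)) i₂ : ℤ) with hddef
  have hd_mod : d % (n (w+1) : ℤ) = k % (n (w+1) : ℤ) := by
    rw [hddef, residue_cast _ hposw1, residue_cast _ hposw1, ← Int.sub_emod]
  have hd_ne : d ≠ 0 := by
    intro h0
    apply hnotdvd
    rw [Int.dvd_iff_emod_eq_zero, ← hd_mod, h0, Int.zero_emod]
  have hd_dvd : (n w : ℤ) ∣ d := by
    have h1 : (n (w+1) : ℤ) ∣ (d - k) := by
      rw [Int.dvd_iff_emod_eq_zero, Int.sub_emod, hd_mod, sub_self, Int.zero_emod]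
    have h2 : (n w : ℤ) ∣ (n (w+1) : ℤ) := Int.natCast_dvd_natCast.mpr (hdvd w)
    have h3 : (n w : ℤ) ∣ (d - k) := h2.trans h1
    have h4 : d = (d - k) + k := by ring
    rw [h4]; exact dvd_add h3 hPw'
  have habs_d : (n w : ℤ) ≤ |d| := Int.le_of_dvd (abs_pos.mpr hd_ne) ((dvd_abs _ _).mpr hd_dvd)
  -- real setup
  set g : ℕ → ℝ := fun v =>
    ((residue (n (v+1)) i₁ : ℝ) - (residue (n (v+1)) i₂ : ℝ)) / ((n v : ℝ) ^ 2 * (n (v+1) : ℝ))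
    with hgdef
  have hgeq : ∀ v, g v = (residue (n (v+1)) i₁ : ℝ) / ((n v : ℝ) ^ 2 * (n (v+1) : ℝ))
      - (residue (n (v+1)) i₂ : ℝ) / ((n v : ℝ) ^ 2 * (n (v+1) : ℝ)) := by
    intro v; simp only [hgdef]; rw [sub_div]
  have hgsum : Summable g := by
    have h1 := (hsum i₁).sub (hsum i₂)
    exact h1.congr fun v => (hgeq v).symm
  have hV : distalV n i₁ - distalV n i₂ = ∑' v, g v := by
    unfold distalV
    rw [← Summable.tsum_sub (hsum i₁) (hsum i₂)]
    exact (tsum_congr fun v => (hgeq v).symm)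
  -- lower bound on the main term
  have hnw : (0:ℝ) < (n w : ℝ) := by exact_mod_cast hpos w
  have hnw1 : (0:ℝ) < (n (w+1) : ℝ) := by exact_mod_cast hpos (w+1)
  have hgw_num : ((residue (n (w+1)) i₁ : ℝ) - (residue (n (w+1)) i₂ : ℝ)) = (d : ℝ) := by
    rw [hddef]; push_cast; ring
  have hgw_abs : |g w| = |(d:ℝ)| / ((n w : ℝ) ^ 2 * (n (w+1) : ℝ)) := by
    simp only [hgdef]
    rw [hgw_num, abs_div, abs_of_pos (by positivity : (0:ℝ) < (n w : ℝ) ^ 2 * (n (w+1) : ℝ))]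
  have hgw_lb : 1 / ((n w : ℝ) * (n (w+1) : ℝ)) ≤ |g w| := by
    rw [hgw_abs]
    have hdR : (n w : ℝ) ≤ |(d:ℝ)| := by
      rw [← Int.cast_abs]; exact_mod_cast habs_d
    rw [div_le_div_iff₀ (by positivity) (by positivity)]
    calc 1 * ((n w : ℝ) ^ 2 * (n (w+1) : ℝ)) = (n w : ℝ) * ((n w : ℝ) * (n (w+1) : ℝ)) := by ring
      _ ≤ |(d:ℝ)| * ((n w : ℝ) * (n (w+1) : ℝ)) := by gcongr
  -- terms below w vanish
  have hzero : ∀ v < w, g v = 0 := by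
    intro v hv
    have h1 : n (v+1) ∣ n w := nchain n hdvd (v+1) w (by omega)
    have h2 : (n (v+1) : ℤ) ∣ k := (Int.natCast_dvd_natCast.mpr h1).trans hPw'
    have h3 : residue (n (v+1)) i₁ = residue (n (v+1)) i₂ := residue_eq_of_dvd _ h2
    simp only [hgdef, h3, sub_self, zero_div]
  have hsum_range : ∑ v ∈ Finset.range (w+1), g v = g w := by
    rw [Finset.sum_range_succ, Finset.sum_eq_zero, zero_add]
    intro v hv
    exact hzero v (Finset.mem_range.mp hv)
  -- tail bound
  set T : ℝ := ∑' v, g (v + (w+1)) with hTdef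
  have hsplit : g w + T = ∑' v, g v := by
    rw [← hsum_range, hTdef]
    exact Summable.sum_add_tsum_nat_add (w+1) hgsum
  have htail_bound : ∀ v : ℕ, |g (v + (w+1))| ≤ (1 / (n (w+1) : ℝ) ^ 2) * ((1:ℝ)/4) ^ v := by
    intro v
    set s : ℕ := v + (w+1) with hsdef
    have hns : (0:ℝ) < (n s : ℝ) := by exact_mod_cast hpos s
    have hns1 : (0:ℝ) < (n (s+1) : ℝ) := by exact_mod_cast hpos (s+1)
    have hnum : |(residue (n (s+1)) i₁ : ℝ) - (residue (n (s+1)) i₂ : ℝ)| ≤ (n (s+1) : ℝ) := by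
      have h1 := residue_lt (n (s+1)) (hpos (s+1)) i₁
      have h2 := residue_lt (n (s+1)) (hpos (s+1)) i₂
      rw [abs_sub_le_iff]
      have c1 : (residue (n (s+1)) i₁ : ℝ) ≤ (n (s+1) : ℝ) := by exact_mod_cast h1.le
      have c2 : (residue (n (s+1)) i₂ : ℝ) ≤ (n (s+1) : ℝ) := by exact_mod_cast h2.le
      have c3 : (0:ℝ) ≤ (residue (n (s+1)) i₁ : ℝ) := Nat.cast_nonneg _
      have c4 : (0:ℝ) ≤ (residue (n (s+1)) i₂ : ℝ) := Nat.cast_nonneg _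
      constructor <;> linarith
    have hshift : (2:ℝ) ^ v * (n (w+1) : ℝ) ≤ (n s : ℝ) := by
      exact_mod_cast nshift n hn0 hn1 hgrow3 (w+1) (by omega) v
    have habs : |g s| = |(residue (n (s+1)) i₁ : ℝ) - (residue (n (s+1)) i₂ : ℝ)|
        / ((n s : ℝ) ^ 2 * (n (s+1) : ℝ)) := by
      simp only [hgdef]
      rw [abs_div, abs_of_pos (by positivity : (0:ℝ) < (n s : ℝ) ^ 2 * (n (s+1) : ℝ))]
    rw [habs]
    calc |(residue (n (s+1)) i₁ : ℝ) - (residue (n (s+1)) i₂ : ℝ)| / ((n s : ℝ) ^ 2 * (n (s+1) : ℝ))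
        ≤ (n (s+1) : ℝ) / ((n s : ℝ) ^ 2 * (n (s+1) : ℝ)) := by gcongr
      _ = 1 / (n s : ℝ) ^ 2 := by field_simp
      _ ≤ 1 / ((2:ℝ) ^ v * (n (w+1) : ℝ)) ^ 2 := by gcongr
      _ = (1 / (n (w+1) : ℝ) ^ 2) * ((1:ℝ)/4) ^ v := by
          rw [quarter_pow, mul_pow]
          field_simp
  have hgeo : Summable fun v : ℕ => (1 / (n (w+1) : ℝ) ^ 2) * ((1:ℝ)/4) ^ v :=
    (summable_geometric_of_lt_one (by norm_num) (by norm_num)).mul_left _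
  have hTabs_sum : Summable fun v => |g (v + (w+1))| :=
    Summable.of_nonneg_of_le (fun v => abs_nonneg _) htail_bound hgeo
  have hT : |T| ≤ (1 / (n (w+1) : ℝ) ^ 2) * (4/3) := by
    calc |T| ≤ ∑' v, |g (v + (w+1))| := by
          rw [hTdef]
          simpa [Real.norm_eq_abs] using
            norm_tsum_le_tsum_norm (f := fun v => g (v + (w+1)))
              (by simpa [Real.norm_eq_abs] using hTabs_sum)
      _ ≤ ∑' v, (1 / (n (w+1) : ℝ) ^ 2) * ((1:ℝ)/4) ^ v := Summable.tsum_le_tsum htail_bound hTabs_sum hgeo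
      _ = (1 / (n (w+1) : ℝ) ^ 2) * (4/3) := by
          rw [tsum_mul_left, tsum_geometric_of_lt_one (by norm_num) (by norm_num)]
          norm_num
  -- combine
  have hmain : 1 / ((n w : ℝ) * (n (w+1) : ℝ)) - (1 / (n (w+1) : ℝ) ^ 2) * (4/3)
      ≤ |distalV n i₁ - distalV n i₂| := by
    rw [hV, ← hsplit]
    have h3 : |g w| ≤ |g w + T| + |T| := by
      calc |g w| = |(g w + T) + (-T)| := by congr 1; ring
        _ ≤ |g w + T| + |(-T)| := abs_add_le _ _
        _ = |g w + T| + |T| := by rw [abs_neg]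
    linarith [hgw_lb, hT]
  -- final arithmetic
  have key : ∀ M : ℝ, (n 1 : ℝ) ≤ M → (n w : ℝ) ≤ M →
      (2/3) * (M ^ (3*m+1))⁻¹ ≤ |distalV n i₁ - distalV n i₂| := by
    intro M hM1 hMw
    have hn1R : (2:ℝ) ≤ (n 1 : ℝ) := by exact_mod_cast hn1
    have hM2 : (2:ℝ) ≤ M := le_trans hn1R hM1
    have hMpos : (0:ℝ) < M := by linarith
    refine le_trans ?_ hmain
    rcases Nat.eq_zero_or_pos w with hw0 | hw1
    · -- w = 0
      have ha : (n w : ℝ) = 1 := by rw [hw0, hn0]; norm_num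
      have hb1 : (n (w+1) : ℝ) = (n 1 : ℝ) := by rw [hw0]
      set b : ℝ := (n (w+1) : ℝ) with hbdef
      have hb2 : (2:ℝ) ≤ b := by rw [hb1]; exact hn1R
      have hbpos : (0:ℝ) < b := by linarith
      have hMb : b ≤ M := by rw [hb1]; exact hM1
      have hpow : 64 * M ≤ M ^ (3*m+1) := by
        have h1 : M ^ (3*m+1) = M ^ (3*m) * M := by rw [pow_succ]
        have h2 : (2:ℝ) ^ (3*m) ≤ M ^ (3*m) := pow_le_pow_left₀ (by norm_num) hM2 _
        have h4 : (2:ℝ) ^ 6 ≤ 2 ^ (3*m) := pow_le_pow_right₀ (by norm_num) (by omega)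
        have h5 : (64:ℝ) ≤ M ^ (3*m) := by norm_num at h4 ⊢; linarith
        rw [h1]
        nlinarith [hMpos, h5]
      have h5 : (M ^ (3*m+1))⁻¹ ≤ (64 * M)⁻¹ :=
        inv_anti₀ (by positivity) hpow
      have h6 : (2/3 : ℝ) * (M ^ (3*m+1))⁻¹ ≤ (2/3) * (64*M)⁻¹ := by linarith
      refine le_trans h6 ?_
      rw [ha, one_mul]
      have e0 : (2/3 : ℝ) * (64*M)⁻¹ ≤ 1/(96*b) := by
        rw [inv_eq_one_div, mul_one_div, div_le_div_iff₀ (by positivity) (by positivity)]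
        nlinarith [hMb, hbpos]
      have e2 : (4/3 : ℝ)/b^2 ≤ (2/3)/b := by
        rw [div_le_div_iff₀ (by positivity) (by positivity)]
        nlinarith [hb2, hbpos]
      have e3 : (1:ℝ)/(96*b) ≤ (1/3)/b := by
        rw [div_le_div_iff₀ (by positivity) (by positivity)]
        nlinarith [hbpos]
      have e4 : (1:ℝ)/b^2 * (4/3) = (4/3)/b^2 := by ring
      have e5 : (1/3 : ℝ)/b = 1/b - (2/3)/b := by ring
      linarith
    · -- w ≥ 1
      set a : ℝ := (n w : ℝ) with hadef
      set b : ℝ := (n (w+1) : ℝ) with hbdef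
      have ha2 : (2:ℝ) ≤ a := by
        have h1 : 2 ^ 1 ≤ 2 ^ w := Nat.pow_le_pow_right (by norm_num) hw1
        have h2 := hge w
        have h3 : 2 ≤ n w := by omega
        rw [hadef]; exact_mod_cast h3
      have hcube : a ^ 3 ≤ b := by
        rw [hadef, hbdef]; exact_mod_cast (hgrow w hw1).1
      have hupper : b ≤ a ^ (3*m) := by
        rw [hadef, hbdef]; exact_mod_cast (hgrow w hw1).2
      have hbpos : (0:ℝ) < b := hnw1
      have hapos : (0:ℝ) < a := hnw
      have h4a : 4 * a ≤ b := by nlinarith [ha2, hcube]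
      have hMa : a * b ≤ M ^ (3*m+1) := by
        have h1 : a ^ (3*m+1) ≤ M ^ (3*m+1) := pow_le_pow_left₀ (by linarith) hMw _
        have h3 : a * a ^ (3*m) = a ^ (3*m+1) := by rw [pow_succ]; ring
        nlinarith [hupper, hapos]
      have habpos : (0:ℝ) < a * b := by positivity
      have h5 : (M ^ (3*m+1))⁻¹ ≤ (a*b)⁻¹ := inv_anti₀ habpos hMa
      have h6 : (2/3 : ℝ) * (M ^ (3*m+1))⁻¹ ≤ (2/3) * (a*b)⁻¹ := by linarith
      refine le_trans h6 ?_
      have e1 : (1:ℝ)/b^2 * (4/3) ≤ 1/3 * (a*b)⁻¹ := by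
        rw [show (1:ℝ)/b^2 * (4/3) = (4/3)/b^2 by ring,
            show (1:ℝ)/3 * (a*b)⁻¹ = (1/3)/(a*b) by rw [inv_eq_one_div]; ring,
            div_le_div_iff₀ (by positivity) habpos]
        nlinarith [h4a, hbpos, hapos]
      have e2 : (1:ℝ)/(a*b) = (a*b)⁻¹ := by rw [inv_eq_one_div]
      linarith
  refine ⟨?_, ?_⟩
  · intro hlt
    have hw0 : w = 0 := by
      by_contra h
      have hw1 : 1 ≤ w := by omega
      have h1 : n 1 ∣ n w := nchain n hdvd 1 w hw1
      have h2 : (n 1 : ℤ) ∣ k := (Int.natCast_dvd_natCast.mpr h1).trans hPw'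
      have h3 : (n 1 : ℤ) ≤ |k| := Int.le_of_dvd (abs_pos.mpr hk) ((dvd_abs _ _).mpr h2)
      omega
    refine key (n 1 : ℝ) le_rfl ?_
    rw [hw0, hn0]
    exact_mod_cast hn1.le
  · intro hge'
    refine key (|(i₁:ℝ) - (i₂:ℝ)|) ?_ ?_
    · rw [hkdef] at hge'
      have h := (Int.cast_le (R := ℝ)).mpr hge'
      push_cast at h
      exact h
    · have h2 : (n w : ℤ) ≤ |k| := Int.le_of_dvd (abs_pos.mpr hk) ((dvd_abs _ _).mpr hPw')
      rw [hkdef] at h2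
      have h := (Int.cast_le (R := ℝ)).mpr h2
      push_cast at h
      exact h
end

section
/- Let V : ℤ → ℝ be limit-periodic, i.e., V is bounded and there exist periodic sequences Vₖ : ℤ → ℝ with sup_n |V(n) − Vₖ(n)| → 0. Then the hull of V — the closure in ℓ∞(ℤ) of the set of shifts {V(· + k) : k ∈ ℤ} with respect to the sup norm — is compact and totally disconnected. -/
open Filter Topology

/-- The shift of a bounded sequence `V ∈ ℓ∞(ℤ)` (realized as the bounded continuous
functions on the discrete space `ℤ`, with the sup norm): `(shift V k)(n) = V(n + k)`. -/
noncomputable def shiftSeq (V : BoundedContinuousFunction ℤ ℝ) (k : ℤ) :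
    BoundedContinuousFunction ℤ ℝ :=
  V.compContinuous ⟨fun n => n + k, continuous_of_discreteTopology⟩

lemma shiftSeq_apply (V : BoundedContinuousFunction ℤ ℝ) (k n : ℤ) :
    shiftSeq V k n = V (n + k) := rfl

lemma shiftSeq_shiftSeq (V : BoundedContinuousFunction ℤ ℝ) (a b : ℤ) :
    shiftSeq (shiftSeq V a) b = shiftSeq V (a + b) := by
  ext n
  simp only [shiftSeq_apply]
  congr 1
  ring

/-- Shifting is an isometry. -/
lemma dist_shiftSeq (f g : BoundedContinuousFunction ℤ ℝ) (k : ℤ) :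
    dist (shiftSeq f k) (shiftSeq g k) = dist f g := by
  apply le_antisymm
  · refine (BoundedContinuousFunction.dist_le dist_nonneg).2 fun n => ?_
    exact BoundedContinuousFunction.dist_coe_le_dist (n + k)
  · refine (BoundedContinuousFunction.dist_le dist_nonneg).2 fun n => ?_
    have := BoundedContinuousFunction.dist_coe_le_dist (f := shiftSeq f k)
      (g := shiftSeq g k) (n - k)
    simpa only [shiftSeq_apply, sub_add_cancel] using this

lemma dist_shiftSeq_shiftSeq (V : BoundedContinuousFunction ℤ ℝ) (m m' : ℤ) :
    dist (shiftSeq V m) (shiftSeq V m') = dist (shiftSeq V (m - m')) V := by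
  have h1 : shiftSeq V m = shiftSeq (shiftSeq V (m - m')) m' := by
    rw [shiftSeq_shiftSeq]; congr 1; ring
  have h2 : shiftSeq V m' = shiftSeq (shiftSeq V 0) m' := by
    rw [shiftSeq_shiftSeq, zero_add]
  calc dist (shiftSeq V m) (shiftSeq V m')
      = dist (shiftSeq (shiftSeq V (m - m')) m') (shiftSeq (shiftSeq V 0) m') := by
        rw [← h1, ← h2]
    _ = dist (shiftSeq V (m - m')) (shiftSeq V 0) := dist_shiftSeq _ _ _
    _ = dist (shiftSeq V (m - m')) V := by
        congr 1
        ext n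
        simp [shiftSeq_apply]

/-- Integer multiples of a period are periods. -/
lemma periodic_int (W : BoundedContinuousFunction ℤ ℝ) (p : ℕ)
    (hW : ∀ n : ℤ, W (n + (p : ℤ)) = W n) (j n : ℤ) : W (n + j * (p : ℤ)) = W n := by
  have h : Function.Periodic (fun n : ℤ => W n) (p : ℤ) := hW
  exact (h.int_mul j) n

/-- Key estimate: shifts of `V` whose indices agree mod the period of `W` are
`2 · dist V W`-close. -/
lemma dist_shift_le (V W : BoundedContinuousFunction ℤ ℝ) (p : ℕ)
    (hW : ∀ n : ℤ, W (n + (p : ℤ)) = W n) {m m' : ℤ} (h : (p : ℤ) ∣ m - m') :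
    dist (shiftSeq V m) (shiftSeq V m') ≤ 2 * dist V W := by
  refine (BoundedContinuousFunction.dist_le (by positivity)).2 fun n => ?_
  obtain ⟨j, hj⟩ := h
  have hWW : W (n + m) = W (n + m') := by
    have : n + m = (n + m') + j * (p : ℤ) := by rw [mul_comm]; linarith [hj]
    rw [this, periodic_int W p hW j (n + m')]
  calc dist (shiftSeq V m n) (shiftSeq V m' n)
      = dist (V (n + m)) (V (n + m')) := rfl
    _ ≤ dist (V (n + m)) (W (n + m)) + dist (W (n + m)) (V (n + m')) := dist_triangle _ _ _
    _ = dist (V (n + m)) (W (n + m)) + dist (W (n + m')) (V (n + m')) := by rw [hWW]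
    _ ≤ dist V W + dist V W := add_le_add
        (BoundedContinuousFunction.dist_coe_le_dist _)
        (by rw [dist_comm]; exact BoundedContinuousFunction.dist_coe_le_dist _)
    _ = 2 * dist V W := by ring

/-- Let `V : ℤ → ℝ` be limit-periodic: `V` is bounded and a uniform
limit of periodic sequences.  Then the hull of `V` — the closure in `ℓ∞(ℤ)` of the set
of shifts of `V` — is compact and totally disconnected. -/
theorem hull_isCompact_isTotallyDisconnected
    (V : BoundedContinuousFunction ℤ ℝ)
    (hlp : ∃ W : ℕ → BoundedContinuousFunction ℤ ℝ,
      (∀ k, ∃ p : ℕ, 0 < p ∧ ∀ n : ℤ, W k (n + (p : ℤ)) = W k n) ∧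
        Tendsto W atTop (𝓝 V)) :
    IsCompact (closure (Set.range fun k : ℤ => shiftSeq V k)) ∧
      IsTotallyDisconnected (closure (Set.range fun k : ℤ => shiftSeq V k)) := by
  obtain ⟨W, hWper, hWlim⟩ := hlp
  have hWdist : ∀ ε > 0, ∃ k, dist V (W k) < ε := by
    intro ε hε
    have := (Metric.tendsto_atTop.1 hWlim) ε hε
    obtain ⟨N, hN⟩ := this
    exact ⟨N, by rw [dist_comm]; exact hN N le_rfl⟩
  constructor
  · -- Compactness
    apply TotallyBounded.isCompact_of_isClosed _ isClosed_closure
    apply TotallyBounded.closure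
    rw [Metric.totallyBounded_iff]
    intro η hη
    obtain ⟨k, hk⟩ := hWdist (η / 4) (by positivity)
    obtain ⟨p, hp, hWp⟩ := hWper k
    refine ⟨(fun i : ℕ => shiftSeq V (i : ℤ)) '' Set.Iio p, (Set.finite_Iio p).image _, ?_⟩
    rintro f ⟨m, rfl⟩
    have hr0 : 0 ≤ m % (p : ℤ) := Int.emod_nonneg m (by exact_mod_cast hp.ne')
    have hrp : m % (p : ℤ) < (p : ℤ) := Int.emod_lt_of_pos m (by exact_mod_cast hp)
    refine Set.mem_biUnion (Set.mem_image_of_mem _ (show (m % (p : ℤ)).toNat ∈ Set.Iio p by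
      simp only [Set.mem_Iio]
      omega)) ?_
    have htn : ((((m % (p : ℤ)).toNat : ℕ) : ℤ)) = m % (p : ℤ) := Int.toNat_of_nonneg hr0
    rw [Metric.mem_ball]
    have hdvd : (p : ℤ) ∣ m - m % (p : ℤ) := Int.dvd_self_sub_of_emod_eq rfl
    have := dist_shift_le V (W k) p hWp (m := m) (m' := m % (p : ℤ)) hdvd
    calc dist (shiftSeq V m) (shiftSeq V ((m % (p : ℤ)).toNat : ℤ))
        = dist (shiftSeq V m) (shiftSeq V (m % (p : ℤ))) := by rw [htn]
      _ ≤ 2 * dist V (W k) := this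
      _ < η := by linarith
  · -- Total disconnectedness
    intro t hts hconn
    intro f hf g hg
    by_contra hfg
    have hδ : 0 < dist f g := dist_pos.2 hfg
    set δ := dist f g with hδdef
    obtain ⟨k, hk⟩ := hWdist (δ / 4) (by positivity)
    obtain ⟨p, hp, hWp⟩ := hWper k
    haveI : NeZero p := ⟨hp.ne'⟩
    set ε := dist V (W k) with hεdef
    -- the classes
    set S : ZMod p → Set (BoundedContinuousFunction ℤ ℝ) :=
      fun r => {h | ∃ m : ℤ, (m : ZMod p) = r ∧ h = shiftSeq V m} with hS
    set X : ZMod p → Set (BoundedContinuousFunction ℤ ℝ) := fun r => closure (S r) with hX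
    have hXclosed : ∀ r, IsClosed (X r) := fun r => isClosed_closure
    -- divisibility from equal residues
    have hdvd : ∀ {a b : ℤ}, ((a : ZMod p) = (b : ZMod p)) → (p : ℤ) ∣ a - b := by
      intro a b hab
      have := (ZMod.intCast_eq_intCast_iff _ _ _).1 hab
      exact Int.ModEq.dvd this.symm
    -- diameter bound on classes
    have hdiamS : ∀ r, ∀ x ∈ S r, ∀ y ∈ S r, dist x y ≤ 2 * ε := by
      rintro r x ⟨m, hm, rfl⟩ y ⟨m', hm', rfl⟩
      exact dist_shift_le V (W k) p hWp (hdvd (hm.trans hm'.symm))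
    have hdiam : ∀ r, ∀ x ∈ X r, ∀ y ∈ X r, dist x y ≤ 2 * ε := by
      intro r x hx y hy
      have h1 : ∀ z ∈ S r, X r ⊆ Metric.closedBall z (2 * ε) := by
        intro z hz
        apply closure_minimal _ Metric.isClosed_closedBall
        intro w hw
        rw [Metric.mem_closedBall]
        exact hdiamS r w hw z hz
      have h2 : S r ⊆ Metric.closedBall x (2 * ε) := by
        intro z hz
        rw [Metric.mem_closedBall, dist_comm]
        exact (h1 z hz) hx
      have h3 : X r ⊆ Metric.closedBall x (2 * ε) :=
        closure_minimal h2 Metric.isClosed_closedBall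
      have := h3 hy
      rw [Metric.mem_closedBall, dist_comm] at this
      exact this
    -- the classes cover the hull
    have hcover : closure (Set.range fun k : ℤ => shiftSeq V k) ⊆ ⋃ r : ZMod p, X r := by
      apply closure_minimal
      · rintro h ⟨m, rfl⟩
        exact Set.mem_iUnion.2 ⟨(m : ZMod p), subset_closure ⟨m, rfl, rfl⟩⟩
      · exact isClosed_iUnion_of_finite hXclosed
    -- classes are pairwise equal or disjoint
    have heqd : ∀ r s : ZMod p, (X r ∩ X s).Nonempty → X r = X s := by
      have key : ∀ r s : ZMod p, (X r ∩ X s).Nonempty → X s ⊆ X r := by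
        rintro r s ⟨ω, hωr, hωs⟩ ω' hω'
        rw [hX, Metric.mem_closure_iff]
        intro η hη
        rw [hX, Metric.mem_closure_iff] at hωr hωs hω'
        obtain ⟨a, ⟨m, hm, rfl⟩, ha⟩ := hωr (η / 3) (by positivity)
        obtain ⟨b, ⟨m', hm', rfl⟩, hb⟩ := hωs (η / 3) (by positivity)
        obtain ⟨c, ⟨m'', hm'', rfl⟩, hc⟩ := hω' (η / 3) (by positivity)
        refine ⟨shiftSeq V (m'' + (m - m')), ⟨m'' + (m - m'), ?_, rfl⟩, ?_⟩
        · push_cast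
          rw [hm, hm', hm'']
          ring
        · have hshift : dist (shiftSeq V m'') (shiftSeq V (m'' + (m - m')))
              = dist (shiftSeq V m) (shiftSeq V m') := by
            rw [dist_comm (shiftSeq V m''), dist_shiftSeq_shiftSeq V (m'' + (m - m')) m'',
              dist_shiftSeq_shiftSeq V m m']
            have harg : m'' + (m - m') - m'' = m - m' := by ring
            rw [harg]
          have hmm' : dist (shiftSeq V m) (shiftSeq V m') < 2 * (η / 3) := by
            calc dist (shiftSeq V m) (shiftSeq V m')
                ≤ dist (shiftSeq V m) ω + dist ω (shiftSeq V m') := dist_triangle _ _ _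
              _ < η / 3 + η / 3 := by
                  rw [dist_comm (shiftSeq V m) ω]
                  exact add_lt_add ha hb
              _ = 2 * (η / 3) := by ring
          calc dist ω' (shiftSeq V (m'' + (m - m')))
              ≤ dist ω' (shiftSeq V m'')
                + dist (shiftSeq V m'') (shiftSeq V (m'' + (m - m'))) := dist_triangle _ _ _
            _ < η / 3 + 2 * (η / 3) := add_lt_add hc (hshift ▸ hmm')
            _ = η := by ring
      intro r s h
      exact le_antisymm (key s r ⟨h.choose, h.choose_spec.2, h.choose_spec.1⟩) (key r s h)
    -- find the class containing f
    obtain ⟨r, hfr⟩ := Set.mem_iUnion.1 (hcover (hts hf))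
    -- g is not in it
    have hgr : g ∉ X r := by
      intro hgr
      have := hdiam r f hfr g hgr
      have hεδ : 2 * ε < δ := by rw [hεdef]; linarith
      linarith
    -- the complementary union
    set D : Set (BoundedContinuousFunction ℤ ℝ) := ⋃ s ∈ {s : ZMod p | X s ≠ X r}, X s with hD
    have hDclosed : IsClosed D :=
      Set.Finite.isClosed_biUnion (Set.toFinite _) (fun s _ => hXclosed s)
    have hXrD : X r ∩ D = ∅ := by
      rw [Set.eq_empty_iff_forall_notMem]
      rintro x ⟨hxr, hxD⟩
      obtain ⟨s, hs, hxs⟩ := Set.mem_iUnion₂.1 hxD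
      exact hs (heqd s r ⟨x, hxs, hxr⟩)
    have hΩsub : closure (Set.range fun k : ℤ => shiftSeq V k) ⊆ X r ∪ D := by
      intro x hx
      obtain ⟨s, hxs⟩ := Set.mem_iUnion.1 (hcover hx)
      by_cases h : X s = X r
      · exact Or.inl (h ▸ hxs)
      · exact Or.inr (Set.mem_iUnion₂.2 ⟨s, h, hxs⟩)
    -- apply preconnectedness with the two open complements
    have := hconn Dᶜ (X r)ᶜ hDclosed.isOpen_compl (hXclosed r).isOpen_compl
      (by
        intro x hx
        rcases hΩsub (hts hx) with h | h
        · exact Or.inl (fun hxD => (Set.eq_empty_iff_forall_notMem.1 hXrD x ⟨h, hxD⟩))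
        · exact Or.inr (fun hxr => (Set.eq_empty_iff_forall_notMem.1 hXrD x ⟨hxr, h⟩)))
      ⟨f, hf, fun hfD => (Set.eq_empty_iff_forall_notMem.1 hXrD f ⟨hfr, hfD⟩)⟩
      ⟨g, hg, hgr⟩
    obtain ⟨x, hxt, hxD, hxr⟩ := this
    rcases hΩsub (hts hxt) with h | h
    · exact hxr h
    · exact hxD h
end
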